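/- The formal power series exp(arctan t) = exp(∑_{k≥0} (−1)^k t^{2k+1}/(2k+1)) ∈ ℚ[[t]], which is the unique power series solution with constant term 1 of the differential equation y'(t) = y(t)/(1+t²), is transcendental (not algebraic) over ℚ(t). -/

import Mathlib

namespace ExpArctanAux

open Polynomial

lemma natDeg_p : (1 + X^2 : ℚ[X]).natDegree = 2 := by compute_degree!

lemma p_ne : (1 + X^2 : ℚ[X]) ≠ 0 := by
  intro h; have := natDeg_p; rw [h] at this; simp at this

lemma deg_p : (1 + X^2 : ℚ[X]).degree = 2 := by
  rw [degree_eq_natDegree p_ne, natDeg_p]; rfl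

lemma prime_p : Prime (1 + X^2 : ℚ[X]) := by
  refine Irreducible.prime ?_
  rw [irreducible_iff_roots_eq_zero_of_degree_le_three (by rw [natDeg_p]) (by rw [natDeg_p]; omega)]
  rw [Multiset.eq_zero_iff_forall_notMem]
  intro a ha
  rw [mem_roots p_ne, IsRoot.def] at ha
  simp at ha
  nlinarith [sq_nonneg a]

lemma dp : derivative (1 + X^2 : ℚ[X]) = 2 * X := by
  rw [derivative_add, derivative_one, derivative_X_pow]
  norm_num
  rw [show (2:ℚ[X]) = C 2 from (map_ofNat C 2).symm]

/-- Key descent lemma: there is no identity `(1+X²)(f'g - fg') = r·fg` with `f, g` nonzero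
and `r` of degree ≤ 1 with nonzero constant coefficient. -/
lemma key : ∀ (N : ℕ) (f g r : ℚ[X]), f ≠ 0 → g ≠ 0 → r.coeff 0 ≠ 0 → r.degree ≤ 1 →
    f.natDegree + g.natDegree ≤ N →
    (1 + X^2) * (derivative f * g - f * derivative g) = r * (f * g) → False := by
  intro N
  induction N with
  | zero =>
    intro f g r hf hg hr0 hr1 hN heq
    have hdvd : (1 + X^2 : ℚ[X]) ∣ r * (f * g) := ⟨_, heq.symm⟩
    rcases (prime_p.dvd_mul.mp hdvd) with h | h
    · have : (1 + X^2 : ℚ[X]).degree ≤ r.degree :=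
        degree_le_of_dvd h (fun h0 => hr0 (by rw [h0]; simp))
      rw [deg_p] at this
      exact absurd (this.trans hr1) (by norm_num)
    · rcases (prime_p.dvd_mul.mp h) with h | h
      · have : (1 + X^2 : ℚ[X]).degree ≤ f.degree := degree_le_of_dvd h hf
        rw [deg_p, degree_eq_natDegree hf] at this
        have h2 : (2:ℕ) ≤ f.natDegree := by exact_mod_cast this
        omega
      · have : (1 + X^2 : ℚ[X]).degree ≤ g.degree := degree_le_of_dvd h hg
        rw [deg_p, degree_eq_natDegree hg] at this
        have h2 : (2:ℕ) ≤ g.natDegree := by exact_mod_cast this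
        omega
  | succ N ih =>
    intro f g r hf hg hr0 hr1 hN heq
    have hdvd : (1 + X^2 : ℚ[X]) ∣ r * (f * g) := ⟨_, heq.symm⟩
    have hpf : (1 + X^2 : ℚ[X]) ∣ f ∨ (1 + X^2 : ℚ[X]) ∣ g := by
      rcases (prime_p.dvd_mul.mp hdvd) with h | h
      · exfalso
        have : (1 + X^2 : ℚ[X]).degree ≤ r.degree :=
          degree_le_of_dvd h (fun h0 => hr0 (by rw [h0]; simp))
        rw [deg_p] at this
        exact absurd (this.trans hr1) (by norm_num)
      · exact prime_p.dvd_mul.mp h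
    rcases hpf with ⟨f₁, rfl⟩ | ⟨g₁, rfl⟩
    · have hf₁ : f₁ ≠ 0 := right_ne_zero_of_mul hf
      have hdeg : ((1 + X^2 : ℚ[X]) * f₁).natDegree = 2 + f₁.natDegree := by
        rw [natDegree_mul p_ne hf₁, natDeg_p]
      have heq' : (1 + X^2) * (derivative f₁ * g - f₁ * derivative g)
          = (r - 2 * X) * (f₁ * g) := by
        apply mul_left_cancel₀ p_ne
        have hd : derivative ((1 + X^2 : ℚ[X]) * f₁)
            = 2 * X * f₁ + (1 + X^2) * derivative f₁ := by
          rw [derivative_mul, dp]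
        rw [hd] at heq
        ring_nf
        ring_nf at heq
        linear_combination heq
      refine ih f₁ g (r - 2 * X) hf₁ hg ?_ ?_ ?_ heq'
      · simpa using hr0
      · refine (degree_sub_le _ _).trans (max_le hr1 ?_)
        compute_degree
      · rw [hdeg] at hN; omega
    · have hg₁ : g₁ ≠ 0 := right_ne_zero_of_mul hg
      have hdeg : ((1 + X^2 : ℚ[X]) * g₁).natDegree = 2 + g₁.natDegree := by
        rw [natDegree_mul p_ne hg₁, natDeg_p]
      have heq' : (1 + X^2) * (derivative f * g₁ - f * derivative g₁)
          = (r + 2 * X) * (f * g₁) := by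
        apply mul_left_cancel₀ p_ne
        have hd : derivative ((1 + X^2 : ℚ[X]) * g₁)
            = 2 * X * g₁ + (1 + X^2) * derivative g₁ := by
          rw [derivative_mul, dp]
        rw [hd] at heq
        ring_nf
        ring_nf at heq
        linear_combination heq
      refine ih f g₁ (r + 2 * X) hf hg₁ ?_ ?_ ?_ heq'
      · simpa using hr0
      · refine (degree_add_le _ _).trans (max_le hr1 ?_)
        compute_degree
      · rw [hdeg] at hN; omega

noncomputable def phi : ℚ[X] →+* PowerSeries ℚ := Polynomial.coeToPowerSeries.ringHom

lemma deriv_phi (a : ℚ[X]) : PowerSeries.derivative ℚ (phi a) = phi (derivative a) := by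
  simp [phi, coeToPowerSeries.ringHom_apply, PowerSeries.derivative_coe]

lemma phi_inj : Function.Injective phi := by
  intro a b h
  have : (a : PowerSeries ℚ) = (b : PowerSeries ℚ) := h
  exact Polynomial.coe_inj.mp this

lemma phi_p : phi (1 + X^2 : ℚ[X]) = 1 + PowerSeries.X ^ 2 := by
  simp [phi, coeToPowerSeries.ringHom_apply, Polynomial.coe_add, Polynomial.coe_one,
    Polynomial.coe_pow, Polynomial.coe_X]

/-- coefficient-wise derivative (derivative in `t` of `P(t,y)`). -/
noncomputable def dmap (P : ℚ[X][X]) : ℚ[X][X] := P.sum fun n a => monomial n (derivative a)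

lemma dmap_monomial (n : ℕ) (a : ℚ[X]) : dmap (monomial n a) = monomial n (derivative a) := by
  unfold dmap
  rw [Polynomial.sum_monomial_index]
  simp

lemma dmap_add (P Q : ℚ[X][X]) : dmap (P + Q) = dmap P + dmap Q := by
  unfold dmap
  rw [Polynomial.sum_add_index] <;> simp [map_add]

lemma coeff_dmap (P : ℚ[X][X]) (k : ℕ) : (dmap P).coeff k = derivative (P.coeff k) := by
  induction P using Polynomial.induction_on' with
  | add p q hp hq => rw [dmap_add, coeff_add, hp, hq, coeff_add, map_add]
  | monomial n a =>
    rw [dmap_monomial, Polynomial.coeff_monomial, Polynomial.coeff_monomial]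
    split <;> simp

/-- Chain rule for evaluating a two-variable polynomial at a power series. -/
lemma chain (y : PowerSeries ℚ) (P : ℚ[X][X]) :
    PowerSeries.derivative ℚ (eval₂ phi y P) =
      eval₂ phi y (dmap P) + eval₂ phi y (derivative P) * PowerSeries.derivative ℚ y := by
  induction P using Polynomial.induction_on' with
  | add p q hp hq =>
    rw [eval₂_add, map_add, hp, hq, dmap_add, derivative_add, eval₂_add, eval₂_add]
    ring
  | monomial n a =>
    rw [eval₂_monomial, dmap_monomial, derivative_monomial, eval₂_monomial, eval₂_monomial]
    rw [Derivation.leibniz]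
    rw [deriv_phi]
    cases n with
    | zero =>
      simp
    | succ m =>
      rw [Derivation.leibniz_pow]
      simp only [Nat.add_sub_cancel, smul_eq_mul, Nat.cast_add, Nat.cast_one]
      simp only [map_mul, map_add, map_one, map_natCast]
      ring

/-- No minimal-degree algebraic relation for a solution of `(1+t²)y' = y` with `y ≠ 0`. -/
lemma no_min_annihilator (y : PowerSeries ℚ) (hyne : y ≠ 0)
    (hy : (1 + PowerSeries.X ^ 2) * PowerSeries.derivative ℚ y = y)
    (P : ℚ[X][X]) (hPne : P ≠ 0) (hPeval : eval₂ phi y P = 0)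
    (hmin : ∀ Q : ℚ[X][X], Q ≠ 0 → eval₂ phi y Q = 0 → P.natDegree ≤ Q.natDegree) : False := by
  set n := P.natDegree with hn
  -- n ≥ 1
  have hn1 : 1 ≤ n := by
    by_contra h
    have h0 : P.natDegree = 0 := by omega
    have hPC : P = C (P.coeff 0) := eq_C_of_natDegree_eq_zero h0
    rw [hPC, eval₂_C] at hPeval
    have h1 : P.coeff 0 = 0 := phi_inj (by rw [hPeval, map_zero])
    exact hPne (by rw [hPC, h1, map_zero])
  have han : P.coeff n ≠ 0 := fun h => hPne (leadingCoeff_eq_zero.mp h)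
  -- a₀ ≠ 0
  have ha0 : P.coeff 0 ≠ 0 := by
    intro h
    obtain ⟨Q, hQ⟩ := X_dvd_iff.mpr h
    have hQne : Q ≠ 0 := by rintro rfl; rw [mul_zero] at hQ; exact hPne hQ
    have hQeval : eval₂ phi y Q = 0 := by
      have h2 := hPeval
      rw [hQ, eval₂_mul, eval₂_X] at h2
      exact (mul_eq_zero.mp h2).resolve_left hyne
    have hle := hmin Q hQne hQeval
    have : P.natDegree = 1 + Q.natDegree := by
      rw [hQ, natDegree_mul X_ne_zero hQne, natDegree_X]
    omega
  -- the second annihilator R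
  set R : ℚ[X][X] := C (1 + X^2 : ℚ[X]) * dmap P + X * derivative P with hR
  have hchain := chain y P
  rw [hPeval, map_zero] at hchain
  have hER : eval₂ phi y R = 0 := by
    rw [hR, eval₂_add, eval₂_mul, eval₂_mul, eval₂_C, eval₂_X, phi_p]
    nth_rewrite 2 [← hy]
    linear_combination (1 + PowerSeries.X ^ 2 : PowerSeries ℚ) * hchain.symm
  -- coefficients of R
  have hRk : ∀ k, R.coeff k = (1 + X^2) * derivative (P.coeff k) + (X * derivative P).coeff k := by
    intro k
    rw [hR, coeff_add, coeff_C_mul, coeff_dmap]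
  have hR0 : R.coeff 0 = (1 + X^2) * derivative (P.coeff 0) := by
    rw [hRk 0, mul_coeff_zero, coeff_X_zero, zero_mul, add_zero]
  have hRhigh : ∀ k, n < k → R.coeff k = 0 := by
    intro k hk
    obtain ⟨m, rfl⟩ : ∃ m, k = m + 1 := ⟨k - 1, by omega⟩
    rw [hRk, coeff_X_mul, coeff_derivative,
      coeff_eq_zero_of_natDegree_lt (by omega : P.natDegree < m + 1)]
    simp [coeff_eq_zero_of_natDegree_lt (show P.natDegree < m + 1 + 1 by omega)]
  have hRn : R.coeff n = (1 + X^2) * derivative (P.coeff n) + P.coeff n * (n : ℚ[X]) := by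
    obtain ⟨m, hm⟩ : ∃ m, n = m + 1 := ⟨n - 1, by omega⟩
    rw [hRk, hm, coeff_X_mul, coeff_derivative]
    push_cast
    ring_nf
  -- S = lc(P) • R - c • P must vanish
  set S : ℚ[X][X] := C (P.coeff n) * R - C (R.coeff n) * P with hS
  have hES : eval₂ phi y S = 0 := by
    rw [hS, eval₂_sub, eval₂_mul, eval₂_mul, eval₂_C, eval₂_C, hER, hPeval, mul_zero, mul_zero,
      sub_zero]
  have hShigh : ∀ k, n ≤ k → S.coeff k = 0 := by
    intro k hk
    rw [hS, coeff_sub, coeff_C_mul, coeff_C_mul]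
    rcases eq_or_lt_of_le hk with h | h
    · rw [← h]; ring
    · rw [hRhigh k h, coeff_eq_zero_of_natDegree_lt (show P.natDegree < k by omega)]
      ring
  have hS0 : S = 0 := by
    by_contra hSne
    have hle := hmin S hSne hES
    exact hSne (leadingCoeff_eq_zero.mp (by rw [leadingCoeff]; exact hShigh _ hle))
  -- extract the coefficient-0 identity
  have hid : P.coeff n * R.coeff 0 = R.coeff n * P.coeff 0 := by
    have h2 := congrArg (fun Q : ℚ[X][X] => Q.coeff 0) hS0
    simp only [hS, coeff_sub, coeff_C_mul, coeff_zero] at h2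
    exact sub_eq_zero.mp h2
  rw [hR0, hRn] at hid
  -- final contradiction via the descent lemma
  refine key ((P.coeff 0).natDegree + (P.coeff n).natDegree) (P.coeff 0) (P.coeff n)
    ((n : ℚ) • (1 : ℚ[X])) ha0 han ?_ ?_ le_rfl ?_
  · simp
    exact_mod_cast (by omega : n ≠ 0)
  · refine le_trans (degree_smul_le _ _) ?_
    simp
  · rw [smul_eq_C_mul, C_eq_natCast]
    linear_combination hid

end ExpArctanAux

open PowerSeries

/-- A formal power series `g ∈ ℚ[[t]]` is algebraic over `ℚ(t)` if there exists a nonzero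
polynomial `P ∈ ℚ[x][y]` with `P(t, g(t)) = 0`. -/
def IsAlgebraicPS (g : PowerSeries ℚ) : Prop :=
  ∃ P : Polynomial (Polynomial ℚ), P ≠ 0 ∧
    Polynomial.eval₂ Polynomial.coeToPowerSeries.ringHom g P = 0

/-- The formal power series `exp(arctan t) ∈ ℚ[[t]]`, i.e. the unique power series solution
with constant term `1` of the differential equation `y'(t) = y(t)/(1+t²)`, equivalently
`(1 + t²) y'(t) = y(t)`, is transcendental (not algebraic) over `ℚ(t)`. -/
theorem exp_arctan_transcendental
    (y : PowerSeries ℚ)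
    (hy0 : PowerSeries.constantCoeff y = 1)
    (hy : (1 + PowerSeries.X ^ 2) * PowerSeries.derivative ℚ y = y) :
    ¬ IsAlgebraicPS y := by
  rintro ⟨P₀, hP₀ne, hP₀⟩
  classical
  have hyne : y ≠ 0 := fun h => by rw [h, map_zero] at hy0; exact one_ne_zero hy0.symm
  have hex : ∃ m : ℕ, ∃ P : Polynomial (Polynomial ℚ), P ≠ 0 ∧
      Polynomial.eval₂ ExpArctanAux.phi y P = 0 ∧ P.natDegree = m :=
    ⟨P₀.natDegree, P₀, hP₀ne, hP₀, rfl⟩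
  obtain ⟨P, hPne, hPeval, hPdeg⟩ := Nat.find_spec hex
  refine ExpArctanAux.no_min_annihilator y hyne hy P hPne hPeval ?_
  intro Q h1 h2
  rw [hPdeg]
  exact Nat.find_min' hex ⟨Q, h1, h2, rfl⟩
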